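/- If G is the cycle graph on N vertices and t ∈ {1,…,N}, then χ_t(G) = t if and only if G is circularly t-partite, which holds if and only if t divides N. -/

import Mathlib

open SimpleGraph Function

/-- A circular `k`-colouring of the oriented edges of `G`: every colour class is nonempty
(on adjacent pairs), and the colour increases by one along every non-backtracking step. -/
def IsCircularColoring {V : Type*} (G : SimpleGraph V) (k : ℕ) (c : V → V → ZMod k) : Prop :=
  (∀ j : ZMod k, ∃ v w, G.Adj v w ∧ c v w = j) ∧
  ∀ v w z, G.Adj v w → G.Adj w z → z ≠ v → c w z = c v w + 1

/-- `G` is circularly `k`-partite. -/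
def CircularlyPartite {V : Type*} (G : SimpleGraph V) (k : ℕ) : Prop :=
  0 < k ∧ ∃ c : V → V → ZMod k, IsCircularColoring G k c

/-- The oriented edge periodic colouring number: the largest `k` such that `G` is
circularly `k`-partite. -/
noncomputable def chiO {V : Type*} (G : SimpleGraph V) : ℕ :=
  sSup {k | CircularlyPartite G k}

/-- `G` is a path graph. -/
def IsPathGraph {V : Type*} (G : SimpleGraph V) : Prop :=
  ∃ n, Nonempty (G ≃g pathGraph n)

/-- `G` is an extended star graph: a tree with exactly one vertex of degree at least 3. -/
def IsExtendedStar {V : Type*} [Fintype V] (G : SimpleGraph V) [DecidableRel G.Adj] : Prop :=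
  G.IsTree ∧ ∃! v : V, 3 ≤ G.degree v

/-- A (not necessarily proper) vertex colouring is `t`-periodic if every path of length `t`
has endpoints of the same colour. -/
def IsPeriodicColoring {V : Type*} (G : SimpleGraph V) (t : ℕ) {α : Type*} (c : V → α) : Prop :=
  ∀ (u v : V) (p : G.Walk u v), p.IsPath → p.length = t → c u = c v

/-- The vertex `t`-periodic colouring number: the largest `k` such that `G` admits a
`t`-periodic colouring using exactly `k` colours. -/
noncomputable def chiT {V : Type*} (G : SimpleGraph V) (t : ℕ) : ℕ :=
  sSup {k | ∃ c : V → Fin k, Surjective c ∧ IsPeriodicColoring G t c}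

/-- A proper edge colouring: distinct edges sharing an endpoint get distinct colours. -/
def IsProperEdgeColoring {V : Type*} (G : SimpleGraph V) {α : Type*} (c : G.edgeSet → α) : Prop :=
  ∀ e f : G.edgeSet, e ≠ f → (∃ v, v ∈ (e : Sym2 V) ∧ v ∈ (f : Sym2 V)) → c e ≠ c f

/-- The edge chromatic number of `G`. -/
noncomputable def chiStar {V : Type*} (G : SimpleGraph V) : ℕ :=
  sInf {k | ∃ c : G.edgeSet → Fin k, IsProperEdgeColoring G c}


section Stmt17Aux

open scoped Fin.CommRing Fin.NatCast Fin.IntCast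

variable {n : ℕ}

private lemma stmt17_two_ne_zero : (2 : Fin (n+3)) ≠ 0 := by
  intro h
  have h2 : ((2:ℕ) : Fin (n+3)) = 0 := by exact_mod_cast h
  have := congrArg Fin.val h2
  rw [Fin.val_cast_of_lt (by omega)] at this
  simp at this

private lemma stmt17_adj_succ (v : Fin (n+3)) : (cycleGraph (n+3)).Adj v (v+1) := by
  rw [cycleGraph_adj]; right; exact add_sub_cancel_left v 1

private lemma stmt17_adj_iff {u v : Fin (n+3)} :
    (cycleGraph (n+3)).Adj u v ↔ u = v + 1 ∨ v = u + 1 := by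
  rw [cycleGraph_adj, sub_eq_iff_eq_add, sub_eq_iff_eq_add, add_comm (1 : Fin (n+3)) v,
    add_comm (1 : Fin (n+3)) u]

private lemma stmt17_getVert_injOn {V : Type*} {G : SimpleGraph V} {u v : V} (p : G.Walk u v)
    (hp : p.IsPath) :
    ∀ i ≤ p.length, ∀ j ≤ p.length, p.getVert i = p.getVert j → i = j := by
  induction p with
  | nil => intro i hi j hj _; simp at hi hj; omega
  | @cons a b c h q ih =>
    obtain ⟨hq, ha⟩ := (Walk.cons_isPath_iff h q).mp hp
    intro i hi j hj hij
    rw [Walk.length_cons] at hi hj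
    match i, j with
    | 0, 0 => rfl
    | 0, j+1 =>
      exfalso; apply ha
      rw [Walk.mem_support_iff_exists_getVert]
      refine ⟨j, ?_, by omega⟩
      have : (Walk.cons h q).getVert (j+1) = q.getVert j := Walk.getVert_cons_succ q h
      rw [← this, ← hij, Walk.getVert_zero]
    | i+1, 0 =>
      exfalso; apply ha
      rw [Walk.mem_support_iff_exists_getVert]
      refine ⟨i, ?_, by omega⟩
      have : (Walk.cons h q).getVert (i+1) = q.getVert i := Walk.getVert_cons_succ q h
      rw [← this, hij, Walk.getVert_zero]
    | i+1, j+1 =>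
      have := ih hq i (by omega) j (by omega) ?_
      · omega
      · rwa [← Walk.getVert_cons_succ q h, ← Walk.getVert_cons_succ q h]

private lemma stmt17_walk_dir {u v : Fin (n+3)} (p : (cycleGraph (n+3)).Walk u v)
    (hp : p.IsPath) :
    v = u + (p.length : Fin (n+3)) ∨ v = u - (p.length : Fin (n+3)) := by
  rcases Nat.eq_zero_or_pos p.length with h0 | hpos
  · left
    have := p.eq_of_length_eq_zero h0
    rw [h0, this]; simp
  obtain ⟨ε, hε⟩ : ∃ ε, p.getVert 1 - p.getVert 0 = ε := ⟨_, rfl⟩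
  have hε1 : ε = 1 ∨ ε = -1 := by
    have hadj := p.adj_getVert_succ (i := 0) hpos
    rw [stmt17_adj_iff] at hadj
    simp only [zero_add] at hadj
    rcases hadj with h | h
    · right; rw [← hε, h]; ring
    · left; rw [← hε, h]; ring
  have hstep : ∀ i < p.length, p.getVert (i+1) = p.getVert i + ε := by
    intro i
    induction i with
    | zero => intro _; rw [← hε]; ring
    | succ i ih =>
      intro hi
      have h1 : p.getVert (i+1) = p.getVert i + ε := ih (by omega)
      have hadj := p.adj_getVert_succ (i := i+1) hi
      rw [stmt17_adj_iff] at hadj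
      have hne : p.getVert (i+1+1) ≠ p.getVert i := by
        intro hcon
        have := stmt17_getVert_injOn p hp (i+1+1) (by omega) i (by omega) hcon
        omega
      rcases hadj with h | h
      · have h2 : p.getVert (i+1+1) = p.getVert (i+1) - 1 := by rw [h]; ring
        rcases hε1 with he | he
        · exfalso; apply hne; rw [h2, h1, he]; ring
        · rw [h2, he]; ring
      · rcases hε1 with he | he
        · rw [h, he]
        · exfalso; apply hne; rw [h, h1, he]; ring
  have hall : ∀ i ≤ p.length, p.getVert i = u + (i : Fin (n+3)) * ε := by
    intro i; induction i with
    | zero =>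
      intro _
      rw [p.getVert_zero]; simp
    | succ i ih =>
      intro hi
      rw [hstep i (by omega), ih (by omega)]
      push_cast; ring
  have hv : v = u + (p.length : Fin (n+3)) * ε := by
    rw [← hall p.length le_rfl]
    exact p.getVert_length.symm
  rcases hε1 with he | he
  · left; rw [he, mul_one] at hv; exact hv
  · right; rw [he] at hv; exact hv.trans (by ring)

private def stmt17_fwdWalk (v : Fin (n+3)) :
    (L : ℕ) → (cycleGraph (n+3)).Walk v (v + (L : Fin (n+3)))
  | 0 => Walk.nil.copy rfl (by simp)
  | (L+1) => (Walk.cons (stmt17_adj_succ v) (stmt17_fwdWalk (v+1) L)).copy rfl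
      (by push_cast; ring)

private lemma stmt17_fwdWalk_length (v : Fin (n+3)) (L : ℕ) :
    (stmt17_fwdWalk v L).length = L := by
  induction L generalizing v with
  | zero => simp [stmt17_fwdWalk]
  | succ L ih => simp [stmt17_fwdWalk, ih]

private lemma stmt17_fwdWalk_support (v : Fin (n+3)) (L : ℕ) :
    (stmt17_fwdWalk v L).support = (List.range (L+1)).map (fun i : ℕ => v + (i : Fin (n+3))) := by
  induction L generalizing v with
  | zero => rw [show List.range 1 = [0] from rfl]; simp [stmt17_fwdWalk]
  | succ L ih =>
    conv_rhs => rw [List.range_succ_eq_map, List.map_cons, List.map_map]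
    rw [show (stmt17_fwdWalk v (L+1)) = (Walk.cons (stmt17_adj_succ v)
      (stmt17_fwdWalk (v+1) L)).copy rfl (by push_cast; ring) from rfl,
      Walk.support_copy, Walk.support_cons, ih]
    congr 1
    · simp
    · apply List.map_congr_left
      intro i _
      simp only [Function.comp_apply]
      push_cast
      ring

private lemma stmt17_fwdWalk_isPath (v : Fin (n+3)) {L : ℕ} (hL : L < n+3) :
    (stmt17_fwdWalk v L).IsPath := by
  rw [Walk.isPath_def, stmt17_fwdWalk_support]
  refine List.Nodup.map_on ?_ List.nodup_range
  intro i hi j hj hij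
  rw [List.mem_range] at hi hj
  have : (i : Fin (n+3)) = (j : Fin (n+3)) := add_left_cancel hij
  have := congrArg Fin.val this
  rwa [Fin.val_cast_of_lt (by omega), Fin.val_cast_of_lt (by omega)] at this

private lemma stmt17_cast_mod {t : ℕ} (ht : t ∣ n+3) (a : ℕ) :
    ((a % (n+3) : ℕ) : ZMod t) = (a : ZMod t) := by
  rw [← ZMod.natCast_mod (a % (n+3)) t, Nat.mod_mod_of_dvd a ht, ZMod.natCast_mod]

private lemma stmt17_periodic_shift {α : Type*} {t : ℕ} (ht : t < n+3) {c : Fin (n+3) → α}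
    (hc : IsPeriodicColoring (cycleGraph (n+3)) t c) (v : Fin (n+3)) :
    c v = c (v + (t : Fin (n+3))) :=
  hc v _ (stmt17_fwdWalk v t) (stmt17_fwdWalk_isPath v ht) (stmt17_fwdWalk_length v t)

private lemma stmt17_periodic_shift_mul {α : Type*} {t : ℕ} (ht : t < n+3) {c : Fin (n+3) → α}
    (hc : IsPeriodicColoring (cycleGraph (n+3)) t c) (m : ℕ) (v : Fin (n+3)) :
    c v = c (v + ((m * t : ℕ) : Fin (n+3))) := by
  induction m generalizing v with
  | zero => simp
  | succ m ih =>
    rw [ih v, stmt17_periodic_shift ht hc (v + ((m * t : ℕ) : Fin (n+3)))]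
    congr 1
    push_cast
    ring

private lemma stmt17_card_le_gcd {k t : ℕ} (ht1 : 1 ≤ t) (ht : t < n+3)
    {c : Fin (n+3) → Fin k} (hs : Surjective c)
    (hc : IsPeriodicColoring (cycleGraph (n+3)) t c) :
    k ≤ Nat.gcd t (n+3) := by
  set g := Nat.gcd t (n+3) with hgdef
  have hg0 : 0 < g := Nat.gcd_pos_of_pos_left _ ht1
  have hgN : g ∣ n+3 := Nat.gcd_dvd_right t (n+3)
  have hgle : g ≤ n+3 := Nat.le_of_dvd (by omega) hgN
  have hshift_g : ∀ v, c v = c (v + (g : Fin (n+3))) := by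
    intro v
    have hb := Nat.gcd_eq_gcd_ab t (n+3)
    set x : Fin (n+3) := ((Nat.gcdA t (n+3) : ℤ) : Fin (n+3)) with hx
    have hgt : (g : Fin (n+3)) = (t : Fin (n+3)) * x := by
      have hcast := congrArg (fun z : ℤ => ((z : ℤ) : Fin (n+3))) hb
      push_cast at hcast
      have hN0 : ((n : Fin (n+3)) + 3) = 0 := by
        have h3 := Fin.natCast_self (n+3)
        push_cast at h3
        exact h3
      rw [hN0] at hcast
      simpa [hx] using hcast
    have hx2 : (t : Fin (n+3)) * x = ((x.val * t : ℕ) : Fin (n+3)) := by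
      push_cast
      ring
    rw [hgt, hx2]
    exact stmt17_periodic_shift_mul ht hc x.val v
  have hshift_mg : ∀ (m : ℕ) (v : Fin (n+3)), c v = c (v + ((m * g : ℕ) : Fin (n+3))) := by
    intro m
    induction m with
    | zero => simp
    | succ m ih =>
      intro v
      rw [ih v, hshift_g (v + ((m * g : ℕ) : Fin (n+3)))]
      congr 1
      push_cast
      ring
  set c' : Fin g → Fin k := fun i => c ((i.val : ℕ) : Fin (n+3)) with hc'
  have hsurj : Surjective c' := by
    intro y
    obtain ⟨v, hv⟩ := hs y
    refine ⟨⟨v.val % g, Nat.mod_lt _ hg0⟩, ?_⟩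
    have key : c ((v.val % g : ℕ) : Fin (n+3)) = c v := by
      have h1 := hshift_mg (v.val / g) ((v.val % g : ℕ) : Fin (n+3))
      rw [h1]
      congr 1
      have : ((v.val % g : ℕ) : Fin (n+3)) + ((v.val / g * g : ℕ) : Fin (n+3))
          = ((v.val % g + v.val / g * g : ℕ) : Fin (n+3)) := by push_cast; ring
      rw [this, Nat.mod_add_div', Fin.cast_val_eq_self]
    rw [hc']
    simpa using key.trans hv
  simpa using Fintype.card_le_of_surjective c' hsurj

private lemma stmt17_mod_coloring_exists {t : ℕ} (ht1 : 1 ≤ t) (htd : t ∣ n+3) :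
    ∃ c : Fin (n+3) → Fin t, Surjective c ∧ IsPeriodicColoring (cycleGraph (n+3)) t c := by
  have htN : t ≤ n+3 := Nat.le_of_dvd (by omega) htd
  refine ⟨fun v => ⟨v.val % t, Nat.mod_lt _ (by omega)⟩, ?_, ?_⟩
  · intro i
    refine ⟨⟨i.val, lt_of_lt_of_le i.isLt htN⟩, ?_⟩
    ext
    exact Nat.mod_eq_of_lt i.isLt
  · intro u v p hp hlen
    rcases eq_or_lt_of_le htN with heq | hlt
    · exfalso
      have := hp.length_lt
      simp only [Fintype.card_fin] at this
      omega
    have key : ∀ w : Fin (n+3), (w + (t : Fin (n+3))).val % t = w.val % t := by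
      intro w
      rw [Fin.val_add, Fin.val_cast_of_lt hlt, Nat.mod_mod_of_dvd _ htd, Nat.add_mod_right]
    rcases stmt17_walk_dir p hp with h | h
    · rw [hlen] at h
      ext
      show u.val % t = v.val % t
      rw [h, key u]
    · rw [hlen] at h
      have h' : u = v + (t : Fin (n+3)) := by rw [h]; ring
      ext
      show u.val % t = v.val % t
      rw [h', key v]

private lemma stmt17_circ_of_dvd {t : ℕ} (ht1 : 1 ≤ t) (htd : t ∣ n+3) :
    CircularlyPartite (cycleGraph (n+3)) t := by
  haveI : NeZero t := ⟨by omega⟩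
  have htN : t ≤ n+3 := Nat.le_of_dvd (by omega) htd
  set π : Fin (n+3) → ZMod t := fun v => (v.val : ZMod t) with hπdef
  have hπ : ∀ v, π (v + 1) = π v + 1 := by
    intro v
    show (((v+1 : Fin (n+3)).val : ℕ) : ZMod t) = ((v.val : ℕ) : ZMod t) + 1
    rw [Fin.val_add, Fin.val_one, stmt17_cast_mod htd]
    push_cast
    ring
  refine ⟨ht1, fun v w => if w = v + 1 then π v else -π w, ?_, ?_⟩
  · intro j
    refine ⟨((j.val : ℕ) : Fin (n+3)), _, stmt17_adj_succ _, ?_⟩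
    dsimp only
    rw [if_pos rfl]
    show (((((j.val : ℕ) : Fin (n+3))).val : ℕ) : ZMod t) = j
    rw [Fin.val_cast_of_lt (lt_of_lt_of_le (ZMod.val_lt j) htN)]
    exact ZMod.natCast_rightInverse j
  · intro v w z hvw hwz hzv
    dsimp only
    rw [stmt17_adj_iff] at hvw hwz
    have h2 : ∀ a : Fin (n+3), a + 1 + 1 ≠ a := by
      intro a h
      apply stmt17_two_ne_zero (n := n)
      have : a + 2 = a + 0 := by rw [add_zero]; linear_combination h
      exact add_left_cancel this
    rcases hvw with h1 | h1
    · rcases hwz with hz | hz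
      · have hwv : w ≠ v + 1 := by
          intro h
          exact h2 w (by rw [← h1, ← h])
        have hzw : z ≠ w + 1 := by
          intro h
          exact h2 z (by rw [← hz, ← h])
        rw [if_neg hzw, if_neg hwv]
        have : π w = π z + 1 := by rw [hz]; exact hπ z
        rw [this]; ring
      · exact absurd (hz.trans h1.symm) hzv
    · rcases hwz with hz | hz
      · exfalso
        apply hzv
        have := h1.symm.trans hz
        exact (add_left_injective 1 this).symm
      · rw [if_pos hz, if_pos h1, h1]
        exact hπ v

private lemma stmt17_dvd_of_circ {t : ℕ} (ht1 : 1 ≤ t)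
    (hcp : CircularlyPartite (cycleGraph (n+3)) t) : t ∣ n+3 := by
  haveI : NeZero t := ⟨by omega⟩
  obtain ⟨ht0, c, hfull, hstep⟩ := hcp
  have hne : ∀ v : Fin (n+3), v + 2 ≠ v := by
    intro v h
    apply stmt17_two_ne_zero (n := n)
    have : v + 2 = v + 0 := by rw [add_zero, h]
    exact add_left_cancel this
  have key : ∀ m : ℕ, c ((m : Fin (n+3))) ((m : Fin (n+3)) + 1) = c 0 1 + (m : ZMod t) := by
    intro m
    induction m with
    | zero => simp
    | succ m ih =>
      have hs := hstep (m : Fin (n+3)) ((m : Fin (n+3)) + 1) ((m : Fin (n+3)) + 1 + 1)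
        (stmt17_adj_succ _) (stmt17_adj_succ _)
        (by intro h; exact hne (↑m) (by linear_combination h))
      push_cast
      rw [hs, ih]
      ring
  have hNtriv := key (n+3)
  rw [Fin.natCast_self] at hNtriv
  simp only [zero_add] at hNtriv
  have hfin : ((n+3 : ℕ) : ZMod t) = 0 := by
    rwa [left_eq_add] at hNtriv
  rwa [ZMod.natCast_eq_zero_iff] at hfin

private lemma stmt17_chiT_iff {t : ℕ} (ht1 : 1 ≤ t) (htN : t ≤ n+3) :
    chiT (cycleGraph (n+3)) t = t ↔ t ∣ n+3 := by
  set S : Set ℕ := {k | ∃ c : Fin (n+3) → Fin k,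
    Surjective c ∧ IsPeriodicColoring (cycleGraph (n+3)) t c} with hS
  have hchi : chiT (cycleGraph (n+3)) t = sSup S := rfl
  have hSne : S.Nonempty :=
    ⟨1, fun _ => 0, fun y => ⟨0, Subsingleton.elim _ _⟩,
      fun _ _ _ _ _ => Subsingleton.elim _ _⟩
  have hbdd : BddAbove S := by
    refine ⟨n+3, fun k hk => ?_⟩
    obtain ⟨c, hs, -⟩ := hk
    simpa using Fintype.card_le_of_surjective c hs
  constructor
  · intro hchit
    rw [hchi] at hchit
    by_contra hnd
    have htlt : t < n+3 := lt_of_le_of_ne htN (fun h => hnd (h ▸ dvd_refl t))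
    have h1 : sSup S ≤ Nat.gcd t (n+3) := by
      apply csSup_le hSne
      intro k hk
      obtain ⟨c, hs, hc⟩ := hk
      exact stmt17_card_le_gcd ht1 htlt hs hc
    have h2 : Nat.gcd t (n+3) < t := by
      rcases lt_or_eq_of_le (Nat.gcd_le_left (n+3) ht1) with h | h
      · exact h
      · exact absurd (h ▸ Nat.gcd_dvd_right t (n+3)) hnd
    omega
  · intro htd
    rw [hchi]
    apply le_antisymm
    · apply csSup_le hSne
      intro k hk
      obtain ⟨c, hs, hc⟩ := hk
      rcases eq_or_lt_of_le htN with heq | hlt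
      · have := Fintype.card_le_of_surjective c hs
        simpa [← heq] using this
      · have := stmt17_card_le_gcd ht1 hlt hs hc
        rwa [Nat.gcd_eq_left htd] at this
    · exact le_csSup hbdd (stmt17_mod_coloring_exists ht1 htd)

end Stmt17Aux

/-- for the cycle graph on `N` vertices and `t ∈ {1, …, N}`,
`χ_t = t` iff the graph is circularly `t`-partite, iff `t ∣ N`. -/
theorem stmt_17 (N : ℕ) (hN : 3 ≤ N) (t : ℕ) (ht1 : 1 ≤ t) (htN : t ≤ N) :
    (chiT (cycleGraph N) t = t ↔ CircularlyPartite (cycleGraph N) t) ∧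
    (CircularlyPartite (cycleGraph N) t ↔ t ∣ N) := by
  obtain ⟨n, rfl⟩ : ∃ n, N = n + 3 := ⟨N - 3, by omega⟩
  have hcirc : CircularlyPartite (cycleGraph (n+3)) t ↔ t ∣ n+3 :=
    ⟨stmt17_dvd_of_circ ht1, stmt17_circ_of_dvd ht1⟩
  have hchi := stmt17_chiT_iff ht1 htN
  exact ⟨hchi.trans hcirc.symm, hcirc⟩
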